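/- Let ≤ be a degree compatible term order on the monoid of d-variate terms, let Ω ⊂ K^d be a finite set, and let n ∈ ℕ₀ be such that the evaluation homomorphism A_n^Ω : Π_n → K^Ω, p ↦ (p(x))_{x∈Ω}, is surjective. Then every term in the normal set N_≤(I(Ω)) of the vanishing ideal of Ω has total degree at most n, i.e., N_≤(I(Ω)) ⊂ Π_n. -/

import Mathlib

/-- `t` is the leading term (exponent vector) of the polynomial `p` with respect to
the term order `le`: `t` lies in the support of `p` and dominates every term of `p`. -/
def IsLeadingTerm {K : Type*} [CommSemiring K] {d : ℕ}
    (le : (Fin d →₀ ℕ) → (Fin d →₀ ℕ) → Prop)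
    (p : MvPolynomial (Fin d) K) (t : Fin d →₀ ℕ) : Prop :=
  t ∈ p.support ∧ ∀ s ∈ p.support, le s t

/-- **Lemma 2.2.** Let `le` be a degree compatible term order, `Ω ⊂ K^d` finite, and
`n` such that the evaluation homomorphism `A_n^Ω : Π_n → K^Ω` is surjective. Then every
term in the normal set of the vanishing ideal `I(Ω)` has total degree at most `n`. -/
theorem normal_set_subset_Pi_n
    {K : Type*} [Field K] {d : ℕ}
    (le : (Fin d →₀ ℕ) → (Fin d →₀ ℕ) → Prop)
    (hlin : IsLinearOrder (Fin d →₀ ℕ) le)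
    (hone : ∀ t, le 0 t)
    (hmul : ∀ t₁ t₂ t₃, le t₁ t₂ → le (t₁ + t₃) (t₂ + t₃))
    (hdeg : ∀ t₁ t₂, le t₁ t₂ → (∑ i, t₁ i) ≤ (∑ i, t₂ i))
    (Ω : Finset (Fin d → K)) (n : ℕ)
    (hsurj : ∀ v : Ω → K, ∃ p : MvPolynomial (Fin d) K,
      p.totalDegree ≤ n ∧ ∀ x : Ω, MvPolynomial.eval (x : Fin d → K) p = v x)
    (t : Fin d →₀ ℕ)
    (ht : ∀ p : MvPolynomial (Fin d) K, p ≠ 0 →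
      (∀ x ∈ Ω, MvPolynomial.eval x p = 0) → ¬ IsLeadingTerm le p t) :
    (∑ i, t i) ≤ n := by
  by_contra hgt
  push_neg at hgt
  -- interpolate the monomial X^t on Ω
  obtain ⟨p, hpdeg, hpe⟩ := hsurj (fun x => MvPolynomial.eval (x : Fin d → K)
    (MvPolynomial.monomial t (1 : K)))
  -- the coefficient of t in p is 0 since deg p ≤ n < ∑ t
  have hsum : (∑ i, t i) = t.sum fun _ e => e := by
    rw [Finsupp.sum]
    exact (Finset.sum_subset (Finset.subset_univ _) (by
      intro i _ hi
      simpa using Finsupp.notMem_support_iff.mp hi)).symm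
  have hcoeffp : MvPolynomial.coeff t p = 0 := by
    by_contra hc
    have := MvPolynomial.le_totalDegree (MvPolynomial.mem_support_iff.mpr hc)
    omega
  set q : MvPolynomial (Fin d) K := MvPolynomial.monomial t (1 : K) - p with hq
  have hcoeffq : MvPolynomial.coeff t q = 1 := by
    simp [hq, MvPolynomial.coeff_sub, MvPolynomial.coeff_monomial, hcoeffp]
  have hqne : q ≠ 0 := fun h => by simp [h] at hcoeffq
  have hqvan : ∀ x ∈ Ω, MvPolynomial.eval x q = 0 := by
    intro x hx
    have := hpe ⟨x, hx⟩
    simp [hq, map_sub, this]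
  refine ht q hqne hqvan ⟨MvPolynomial.mem_support_iff.mpr (by simp [hcoeffq]), ?_⟩
  intro s hs
  rcases hlin.toTotal.total s t with h | h
  · exact h
  · -- then ∑ s ≥ ∑ t > n, so s ∉ support of p; hence s = t, fine
    by_cases hst : s = t
    · exact hst ▸ h
    · exfalso
      have hsq : MvPolynomial.coeff s q ≠ 0 := MvPolynomial.mem_support_iff.mp hs
      have : MvPolynomial.coeff s p ≠ 0 := by
        intro h0
        apply hsq
        simp [hq, MvPolynomial.coeff_sub, MvPolynomial.coeff_monomial,
          h0, Ne.symm hst]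
      have h1 := MvPolynomial.le_totalDegree (MvPolynomial.mem_support_iff.mpr this)
      have h2 := hdeg t s h
      have hsumS : (∑ i, s i) = s.sum fun _ e => e := by
        rw [Finsupp.sum]
        exact (Finset.sum_subset (Finset.subset_univ _) (by
          intro i _ hi
          simpa using Finsupp.notMem_support_iff.mp hi)).symm
      omega
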